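/- arXiv:2005.06776 — 2 statements merged into one kernel-verified Lean document; each statement's English description precedes it below -/
import Mathlib

section
/- Let $p \in (0,1)$ and define $g(N) = \frac{1-p}{N}\sqrt{\frac{1-(1-p)^N}{(1-p)^N}}$ for real $N > 0$. Then $g$ attains its minimum over $(0,\infty)$ at the unique point $N^* = -c_\star / \log(1-p)$, where $c_\star = 2 + W(-2e^{-2})$ and $W$ is the principal branch of the Lambert W function; equivalently, at the minimizer $(1-p)^{N^*} = e^{-c_\star}$. -/
open Real

noncomputable def psiAux (x : ℝ) : ℝ := Real.exp x * (x - 2) + 2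

lemma psiAux_hasDeriv (x : ℝ) : HasDerivAt psiAux (Real.exp x * (x - 1)) x := by
  have h := ((Real.hasDerivAt_exp x).mul ((hasDerivAt_id x).sub_const 2)).add_const 2
  refine h.congr_deriv ?_
  simp [id]
  ring

noncomputable def phiAux (x : ℝ) : ℝ := (Real.exp x - 1) / x ^ 2

lemma phiAux_hasDeriv {x : ℝ} (hx : x ≠ 0) :
    HasDerivAt phiAux ((Real.exp x * x ^ 2 - (Real.exp x - 1) * (2 * x)) / (x ^ 2) ^ 2) x := by
  have h := ((Real.hasDerivAt_exp x).sub_const 1).div (hasDerivAt_pow 2 x) (pow_ne_zero 2 hx)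
  refine h.congr_deriv ?_
  ring_nf

lemma psiAux_antiOn : StrictAntiOn psiAux (Set.Icc 0 1) := by
  apply strictAntiOn_of_deriv_neg (convex_Icc 0 1)
    (fun x _ => (psiAux_hasDeriv x).continuousAt.continuousWithinAt)
  intro x hx
  rw [interior_Icc] at hx
  rw [(psiAux_hasDeriv x).deriv]
  have := Real.exp_pos x
  nlinarith [hx.1, hx.2]

lemma psiAux_monoOn : StrictMonoOn psiAux (Set.Ici 1) := by
  apply strictMonoOn_of_deriv_pos (convex_Ici 1)
    (fun x _ => (psiAux_hasDeriv x).continuousAt.continuousWithinAt)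
  intro x hx
  rw [interior_Ici] at hx
  rw [(psiAux_hasDeriv x).deriv]
  have := Real.exp_pos x
  have hx' : (1:ℝ) < x := hx
  nlinarith [hx']

lemma psiAux_zero : psiAux 0 = 0 := by simp [psiAux]

lemma psiAux_neg {c : ℝ} (hc1 : 1 ≤ c) (hc : psiAux c = 0) {x : ℝ} (hx0 : 0 < x)
    (hxc : x < c) : psiAux x < 0 := by
  rcases le_or_gt x 1 with h | h
  · have := psiAux_antiOn (Set.mem_Icc.2 ⟨le_refl 0, zero_le_one⟩)
      (Set.mem_Icc.2 ⟨hx0.le, h⟩) hx0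
    rwa [psiAux_zero] at this
  · have := psiAux_monoOn (Set.mem_Ici.2 h.le) (Set.mem_Ici.2 hc1) hxc
    rwa [hc] at this

lemma psiAux_pos {c : ℝ} (hc1 : 1 ≤ c) (hc : psiAux c = 0) {x : ℝ} (hxc : c < x) :
    0 < psiAux x := by
  have := psiAux_monoOn (Set.mem_Ici.2 hc1) (Set.mem_Ici.2 (hc1.trans hxc.le)) hxc
  rwa [hc] at this

lemma phiAux_antiOn {c : ℝ} (hc1 : 1 ≤ c) (hc : psiAux c = 0) :
    StrictAntiOn phiAux (Set.Ioc 0 c) := by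
  apply strictAntiOn_of_deriv_neg (convex_Ioc 0 c)
    (fun x hx => (phiAux_hasDeriv (ne_of_gt hx.1)).continuousAt.continuousWithinAt)
  intro x hx
  rw [interior_Ioc] at hx
  rw [(phiAux_hasDeriv (ne_of_gt hx.1)).deriv]
  apply div_neg_of_neg_of_pos
  · have hpsi := psiAux_neg hc1 hc hx.1 hx.2
    have : Real.exp x * x ^ 2 - (Real.exp x - 1) * (2 * x) = x * psiAux x := by
      simp only [psiAux]; ring
    rw [this]
    exact mul_neg_of_pos_of_neg hx.1 hpsi
  · exact pow_pos (pow_pos hx.1 2) 2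

lemma phiAux_monoOn {c : ℝ} (hc1 : 1 ≤ c) (hc : psiAux c = 0) :
    StrictMonoOn phiAux (Set.Ici c) := by
  have hc0 : (0:ℝ) < c := lt_of_lt_of_le one_pos hc1
  apply strictMonoOn_of_deriv_pos (convex_Ici c)
    (fun x hx => (phiAux_hasDeriv (ne_of_gt (hc0.trans_le hx))).continuousAt.continuousWithinAt)
  intro x hx
  rw [interior_Ici] at hx
  have hx0 : 0 < x := hc0.trans hx
  rw [(phiAux_hasDeriv (ne_of_gt hx0)).deriv]
  apply div_pos
  · have hpsi := psiAux_pos hc1 hc hx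
    have : Real.exp x * x ^ 2 - (Real.exp x - 1) * (2 * x) = x * psiAux x := by
      simp only [psiAux]; ring
    rw [this]
    exact mul_pos hx0 hpsi
  · exact pow_pos (pow_pos hx0 2) 2

lemma phiAux_min {c : ℝ} (hc1 : 1 ≤ c) (hc : psiAux c = 0) {x : ℝ} (hx0 : 0 < x)
    (hne : x ≠ c) : phiAux c < phiAux x := by
  rcases lt_or_gt_of_ne hne with h | h
  · have hc0 : (0:ℝ) < c := lt_of_lt_of_le one_pos hc1
    exact phiAux_antiOn hc1 hc (Set.mem_Ioc.2 ⟨hx0, h.le⟩) (Set.mem_Ioc.2 ⟨hc0, le_rfl⟩) h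
  · exact phiAux_monoOn hc1 hc Set.self_mem_Ici (Set.mem_Ici.2 h.le) h
/-- The asymptotic confidence-interval prefactor `g(N) = (1-p)/N · √((1-(1-p)^N)/(1-p)^N)`
attains its minimum over `(0,∞)` at the unique point `N* = -c⋆ / log(1-p)`, where
`c⋆ = 2 + W(-2e⁻²)` with `W` the principal Lambert W branch; the Lambert value is
characterized by `(c⋆-2) e^{c⋆-2} = -2 e⁻²` together with `c⋆ - 2 ≥ -1` (principal branch).
Equivalently, at the minimizer, `(1-p)^{N*} = e^{-c⋆}`. -/
theorem stmt2 (p : ℝ) (hp : p ∈ Set.Ioo (0:ℝ) 1)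
    (c : ℝ) (hbranch : -1 ≤ c - 2) (hW : (c - 2) * Real.exp (c - 2) = -2 * Real.exp (-2)) :
    let g : ℝ → ℝ := fun N => (1 - p) / N * Real.sqrt ((1 - (1 - p) ^ N) / (1 - p) ^ N)
    let Nstar : ℝ := -c / Real.log (1 - p)
    Nstar ∈ Set.Ioi (0:ℝ) ∧
    IsMinOn g (Set.Ioi (0:ℝ)) Nstar ∧
    (∀ N ∈ Set.Ioi (0:ℝ), IsMinOn g (Set.Ioi (0:ℝ)) N → N = Nstar) ∧
    (1 - p) ^ Nstar = Real.exp (-c) := by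
  obtain ⟨hp0, hp1⟩ := hp
  intro g Nstar
  have hq0 : 0 < 1 - p := by linarith
  have hq1 : 1 - p < 1 := by linarith
  have hL : Real.log (1 - p) < 0 := Real.log_neg hq0 hq1
  have hLne : Real.log (1 - p) ≠ 0 := ne_of_lt hL
  -- facts about c
  have h2 : (c - 2) * Real.exp c = -2 := by
    have he : Real.exp (c - 2) = Real.exp c * Real.exp (-2) := by
      rw [← Real.exp_add]; ring_nf
    rw [he] at hW
    have hE := Real.exp_pos (-2)
    have : ((c - 2) * Real.exp c + 2) * Real.exp (-2) = 0 := by linarith [hW]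
    have h0 := mul_eq_zero.1 this
    rcases h0 with h0 | h0
    · linarith
    · exact absurd h0 (ne_of_gt hE)
  have hc1 : (1:ℝ) ≤ c := by linarith
  have hc0 : (0:ℝ) < c := lt_of_lt_of_le one_pos hc1
  have hpsic : psiAux c = 0 := by simp only [psiAux]; nlinarith [h2]
  -- Nstar positive
  have hN0 : 0 < Nstar := by
    have hnc : -c < 0 := by linarith
    exact div_pos_of_neg_of_neg hnc hL
  -- x(Nstar) = c
  have hxN : -(Nstar * Real.log (1 - p)) = c := by
    show -(-c / Real.log (1 - p) * Real.log (1 - p)) = c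
    field_simp
  -- rpow at Nstar
  have hrpow : (1 - p) ^ Nstar = Real.exp (-c) := by
    rw [Real.rpow_def_of_pos hq0]
    congr 1
    rw [← hxN]; ring
  -- rewrite g as constant times sqrt ∘ phiAux ∘ x
  have hg : ∀ N : ℝ, 0 < N →
      g N = (1 - p) * (-Real.log (1 - p)) * Real.sqrt (phiAux (-(N * Real.log (1 - p)))) := by
    intro N hN
    set x := -(N * Real.log (1 - p)) with hxdef
    have hx : 0 < x := by nlinarith
    have hqN : (1 - p) ^ N = Real.exp (-x) := by
      rw [Real.rpow_def_of_pos hq0]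
      congr 1
      rw [hxdef]; ring
    show (1 - p) / N * Real.sqrt ((1 - (1 - p) ^ N) / (1 - p) ^ N) = _
    rw [hqN]
    have hratio : (1 - Real.exp (-x)) / Real.exp (-x) = Real.exp x - 1 := by
      rw [div_eq_iff (Real.exp_ne_zero _), Real.exp_neg]
      have := Real.exp_ne_zero x
      field_simp
    rw [hratio]
    have hexp1 : (0:ℝ) ≤ Real.exp x - 1 := by nlinarith [Real.add_one_le_exp x]
    have hsq : Real.sqrt (phiAux x) = Real.sqrt (Real.exp x - 1) / x := by
      rw [phiAux, Real.sqrt_div hexp1, Real.sqrt_sq hx.le]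
    rw [hsq]
    have hNx : N = x / (-Real.log (1 - p)) := by
      rw [hxdef]; field_simp
    rw [hNx]
    field_simp
  have hKpos : 0 < (1 - p) * (-Real.log (1 - p)) := by nlinarith
  have hphic_nonneg : 0 ≤ phiAux c := by
    have : (0:ℝ) ≤ Real.exp c - 1 := by nlinarith [Real.add_one_le_exp c]
    exact div_nonneg this (by positivity)
  refine ⟨hN0, ?_, ?_, hrpow⟩
  · -- min
    rw [isMinOn_iff]
    intro N hN
    have hN' : 0 < N := hN
    rw [hg N hN', hg Nstar hN0, hxN]
    apply mul_le_mul_of_nonneg_left _ hKpos.le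
    apply Real.sqrt_le_sqrt
    rcases eq_or_ne (-(N * Real.log (1 - p))) c with h | h
    · rw [h]
    · exact (phiAux_min hc1 hpsic (by nlinarith) h).le
  · -- uniqueness
    intro N hN hmin
    have hN' : 0 < N := hN
    by_contra hne
    have hxne : -(N * Real.log (1 - p)) ≠ c := by
      intro h
      apply hne
      rw [← hxN] at h
      have : N * Real.log (1 - p) = Nstar * Real.log (1 - p) := by linarith
      exact mul_right_cancel₀ hLne this
    have hlt : phiAux c < phiAux (-(N * Real.log (1 - p))) :=
      phiAux_min hc1 hpsic (by nlinarith) hxne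
    have hsqrt : Real.sqrt (phiAux c) < Real.sqrt (phiAux (-(N * Real.log (1 - p)))) :=
      Real.sqrt_lt_sqrt hphic_nonneg hlt
    have hgNlt : g Nstar < g N := by
      rw [hg N hN', hg Nstar hN0, hxN]
      exact mul_lt_mul_of_pos_left hsqrt hKpos
    have := isMinOn_iff.1 hmin Nstar hN0
    linarith
end

section
/- Let $p \in (0,1)$ and $g(N) = \frac{1-p}{N}\sqrt{\frac{1-(1-p)^N}{(1-p)^N}}$. With the substitution $u = -N\log(1-p)$, the minimization of $g$ reduces to minimizing $h(u) = \frac{\sqrt{e^u - 1}}{u}$ over $u > 0$, and $h$ has a unique critical point $u^* > 0$ satisfying $u^* e^{u^*} = 2(e^{u^*}-1)$. -/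
open Real

private noncomputable def hFun : ℝ → ℝ := fun u => Real.sqrt (Real.exp u - 1) / u
private noncomputable def phi : ℝ → ℝ := fun u => u * Real.exp u - 2 * (Real.exp u - 1)

private lemma exp_sub_one_pos {u : ℝ} (hu : 0 < u) : 0 < Real.exp u - 1 := by
  have := Real.add_one_lt_exp (x := u) (by positivity)
  linarith

private lemma hFun_hasDeriv {u : ℝ} (hu : 0 < u) :
    HasDerivAt hFun ((Real.exp u / (2 * Real.sqrt (Real.exp u - 1)) * u
      - Real.sqrt (Real.exp u - 1) * 1) / u ^ 2) u := by
  have h1 : HasDerivAt (fun u : ℝ => Real.exp u - 1) (Real.exp u) u :=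
    (Real.hasDerivAt_exp u).sub_const 1
  have h2 := h1.sqrt (ne_of_gt (exp_sub_one_pos hu))
  exact h2.div (hasDerivAt_id u) (ne_of_gt hu)

private lemma deriv_eq_zero_iff {u : ℝ} (hu : 0 < u) :
    deriv hFun u = 0 ↔ u * Real.exp u = 2 * (Real.exp u - 1) := by
  rw [(hFun_hasDeriv hu).deriv]
  have hs : 0 < Real.sqrt (Real.exp u - 1) := Real.sqrt_pos.mpr (exp_sub_one_pos hu)
  have hsq : Real.sqrt (Real.exp u - 1) ^ 2 = Real.exp u - 1 :=
    Real.sq_sqrt (le_of_lt (exp_sub_one_pos hu))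
  rw [div_eq_zero_iff]
  constructor
  · rintro (h | h)
    · have h' : Real.exp u / (2 * Real.sqrt (Real.exp u - 1)) * u
        = Real.sqrt (Real.exp u - 1) := by linarith
      have h2s : (2 * Real.sqrt (Real.exp u - 1)) ≠ 0 := by positivity
      field_simp at h'
      nlinarith
    · exact absurd h (by positivity)
  · intro h
    left
    have : Real.exp u * u = 2 * Real.sqrt (Real.exp u - 1) * Real.sqrt (Real.exp u - 1) := by
      nlinarith
    rw [div_mul_eq_mul_div, this, mul_one]
    field_simp
    simp

private lemma phi_hasDeriv (u : ℝ) :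
    HasDerivAt phi ((u - 1) * Real.exp u) u := by
  have h1 : HasDerivAt (fun u : ℝ => u * Real.exp u) (1 * Real.exp u + u * Real.exp u) u :=
    (hasDerivAt_id u).mul (Real.hasDerivAt_exp u)
  have h2 : HasDerivAt (fun u : ℝ => 2 * (Real.exp u - 1)) (2 * Real.exp u) u := by
    exact ((Real.hasDerivAt_exp u).sub_const 1).const_mul 2
  have := h1.sub h2
  convert this using 1
  · rfl
  · rfl
  · rfl
  · ring

private lemma phi_neg {u : ℝ} (hu : 0 < u) (hu1 : u ≤ 1) : phi u < 0 := by
  have hanti : StrictAntiOn phi (Set.Icc 0 1) := by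
    apply strictAntiOn_of_deriv_neg (convex_Icc 0 1)
    · exact Continuous.continuousOn (by unfold phi; continuity)
    · intro x hx
      rw [interior_Icc] at hx
      rw [(phi_hasDeriv x).deriv]
      have : x - 1 < 0 := by linarith [hx.2]
      nlinarith [Real.exp_pos x]
  have := hanti (Set.mem_Icc.mpr ⟨le_refl 0, zero_le_one⟩)
    (Set.mem_Icc.mpr ⟨le_of_lt hu, hu1⟩) hu
  simpa [phi] using this

private lemma phi_mono : StrictMonoOn phi (Set.Ici 1) := by
  apply strictMonoOn_of_deriv_pos (convex_Ici 1)
  · exact Continuous.continuousOn (by unfold phi; continuity)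
  · intro x hx
    rw [interior_Ici] at hx
    rw [(phi_hasDeriv x).deriv]
    have : 0 < x - 1 := by linarith [Set.mem_Ioi.mp hx]
    positivity

private lemma phi_exists : ∃ u ∈ Set.Icc (1:ℝ) 2, phi u = 0 := by
  have hc : ContinuousOn phi (Set.Icc 1 2) := Continuous.continuousOn (by unfold phi; continuity)
  have h1 : phi 1 < 0 := by
    have := Real.exp_one_gt_d9
    simp only [phi]
    nlinarith
  have h2 : phi 2 = 2 := by simp only [phi]; ring
  have := intermediate_value_Icc (by norm_num : (1:ℝ) ≤ 2) hc
  have h0 : (0:ℝ) ∈ Set.Icc (phi 1) (phi 2) := by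
    constructor <;> [linarith; linarith]
  obtain ⟨u, hu, hu0⟩ := this h0
  exact ⟨u, hu, hu0⟩

/-- With the substitution `u = -N log(1-p)`, minimizing the confidence-interval prefactor
`g(N) = (1-p)/N · √((1-(1-p)^N)/(1-p)^N)` reduces to minimizing `h(u) = √(e^u - 1)/u`
over `u > 0` (g is a constant multiple of `h ∘ (N ↦ -N log(1-p))`), and `h` has a unique
positive critical point `u*`, which satisfies `u* e^{u*} = 2 (e^{u*} - 1)`. -/
theorem stmt3 (p : ℝ) (hp : p ∈ Set.Ioo (0:ℝ) 1) :
    let g : ℝ → ℝ := fun N => (1 - p) / N * Real.sqrt ((1 - (1 - p) ^ N) / (1 - p) ^ N)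
    let h : ℝ → ℝ := fun u => Real.sqrt (Real.exp u - 1) / u
    (∀ N : ℝ, 0 < N →
        g N = (1 - p) * (-Real.log (1 - p)) * h (-N * Real.log (1 - p))) ∧
    (∃! u : ℝ, 0 < u ∧ deriv h u = 0) ∧
    (∀ u : ℝ, 0 < u → deriv h u = 0 → u * Real.exp u = 2 * (Real.exp u - 1)) := by
  intro g h
  have hfh : h = hFun := rfl
  obtain ⟨hp0, hp1⟩ := hp
  have hq0 : (0:ℝ) < 1 - p := by linarith
  have hq1 : 1 - p < 1 := by linarith
  have hlog : Real.log (1 - p) < 0 := Real.log_neg hq0 hq1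
  refine ⟨?_, ?_, ?_⟩
  · intro N hN
    have hu : 0 < -N * Real.log (1 - p) := by nlinarith
    set u := -N * Real.log (1 - p) with hudef
    have hpow : (1 - p) ^ N = Real.exp (-u) := by
      rw [Real.rpow_def_of_pos hq0]
      congr 1
      simp [hudef]; ring
    have harg : (1 - (1 - p) ^ N) / (1 - p) ^ N = Real.exp u - 1 := by
      rw [hpow, Real.exp_neg]
      field_simp
    simp only [g, h, harg]
    rw [hudef]
    have hN' : N ≠ 0 := ne_of_gt hN
    have hl' : Real.log (1 - p) ≠ 0 := ne_of_lt hlog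
    field_simp
  · rw [hfh]
    obtain ⟨u, hu12, hu0⟩ := phi_exists
    refine ⟨u, ⟨lt_of_lt_of_le one_pos hu12.1, ?_⟩, ?_⟩
    · rw [deriv_eq_zero_iff (lt_of_lt_of_le one_pos hu12.1)]
      have : phi u = 0 := hu0
      simp only [phi] at this; linarith
    · rintro v ⟨hv0, hvd⟩
      rw [deriv_eq_zero_iff hv0] at hvd
      have hphiv : phi v = 0 := by simp only [phi]; linarith
      have hv1 : 1 < v := by
        by_contra hle
        push_neg at hle
        exact absurd hphiv (ne_of_lt (phi_neg hv0 hle))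
      exact phi_mono.injOn (Set.mem_Ici.mpr (le_of_lt hv1)) (Set.mem_Ici.mpr hu12.1)
        (by rw [hphiv, hu0])
  · intro u hu hd
    rw [hfh] at hd
    exact (deriv_eq_zero_iff hu).mp hd
end
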